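/- If G is a connected well-dominated graph and H is a nontrivial complete graph, then the lexicographic product G[H] is well-dominated. -/

import Mathlib

open SimpleGraph Finset

/-- Open neighborhood of a set: vertices having a neighbor in `S`. -/
def nbhd {V : Type*} (G : SimpleGraph V) (S : Set V) : Set V := {v | ∃ u ∈ S, G.Adj u v}

/-- Closed neighborhood of a vertex. -/
def closedNbhd {V : Type*} (G : SimpleGraph V) (v : V) : Set V := insert v (G.neighborSet v)

/-- `S` dominates vertex `v`. -/
def Dominates {V : Type*} (G : SimpleGraph V) (S : Set V) (v : V) : Prop :=
  v ∈ S ∨ ∃ u ∈ S, G.Adj u v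

/-- `D` is a dominating set of `G`. -/
def IsDomSet {V : Type*} (G : SimpleGraph V) (D : Set V) : Prop := ∀ v, Dominates G D v

/-- `D` is a minimal dominating set of `G`. -/
def IsMinDomSet {V : Type*} (G : SimpleGraph V) (D : Set V) : Prop :=
  IsDomSet G D ∧ ∀ D' ⊂ D, ¬ IsDomSet G D'

/-- `D` is an irreducible dominating set of `G`. -/
def IsIrredDomSet {V : Type*} (G : SimpleGraph V) (D : Set V) : Prop :=
  IsDomSet G D ∧ ¬ ∃ u ∈ D, IsDomSet G (D \ {u}) ∧ nbhd G D = nbhd G (D \ {u})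

/-- Lexicographic product of two simple graphs. -/
def lexProd {V W : Type*} (G : SimpleGraph V) (H : SimpleGraph W) : SimpleGraph (V × W) where
  Adj p q := G.Adj p.1 q.1 ∨ (p.1 = q.1 ∧ H.Adj p.2 q.2)
  symm := by
    constructor
    rintro p q (h | ⟨e, h⟩)
    · exact Or.inl h.symm
    · exact Or.inr ⟨e.symm, h.symm⟩
  loopless := by
    constructor
    rintro p (h | ⟨_, h⟩)
    · exact G.loopless.irrefl _ h
    · exact H.loopless.irrefl _ h

/-- Projection of `D ⊆ V(G) × V(H)` to `G`. -/
def projG {V W : Type*} (D : Set (V × W)) : Set V := {x | ∃ y, (x, y) ∈ D}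

/-- Fiber of `D ⊆ V(G) × V(H)` over `x ∈ V(G)`. -/
def projH {V W : Type*} (D : Set (V × W)) (x : V) : Set W := {y | (x, y) ∈ D}

/-- A graph is well-dominated if all its minimal dominating sets have the same size. -/
def WellDominated (V : Type*) [Fintype V] (G : SimpleGraph V) : Prop :=
  ∀ D₁ D₂ : Finset V, IsMinDomSet G ↑D₁ → IsMinDomSet G ↑D₂ → D₁.card = D₂.card


section Aux
variable {V W : Type*}

lemma dom_iff_aux (G : SimpleGraph V) [Nonempty W] (D : Set (V × W)) :
    IsDomSet (lexProd G (⊤ : SimpleGraph W)) D ↔ IsDomSet G (projG D) := by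
  constructor
  · intro h x
    obtain ⟨y⟩ := ‹Nonempty W›
    rcases h (x, y) with hm | ⟨⟨x', y'⟩, hm, hadj⟩
    · exact Or.inl ⟨y, hm⟩
    · rcases hadj with hg | ⟨he, _⟩
      · exact Or.inr ⟨x', ⟨y', hm⟩, hg⟩
      · have hx : x' = x := he
        exact Or.inl ⟨y', hx ▸ hm⟩
  · intro h p
    obtain ⟨x, y⟩ := p
    rcases h x with ⟨y', hm⟩ | ⟨x', ⟨y', hm⟩, hadj⟩
    · by_cases hy : y' = y
      · exact Or.inl (hy ▸ hm)
      · exact Or.inr ⟨(x, y'), hm, Or.inr ⟨rfl, hy⟩⟩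
    · exact Or.inr ⟨(x', y'), hm, Or.inl hadj⟩

lemma fiber_subsingleton_aux (G : SimpleGraph V) [Nonempty W] (D : Set (V × W))
    (hmin : IsMinDomSet (lexProd G (⊤ : SimpleGraph W)) D)
    {x : V} {y₁ y₂ : W} (h1 : (x, y₁) ∈ D) (h2 : (x, y₂) ∈ D) : y₁ = y₂ := by
  by_contra hne
  have hproj : projG (D \ {(x, y₁)}) = projG D := by
    ext x'
    constructor
    · rintro ⟨y, hy, _⟩; exact ⟨y, hy⟩
    · rintro ⟨y, hy⟩
      by_cases hp : (x', y) = (x, y₁)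
      · obtain ⟨rfl, rfl⟩ := Prod.ext_iff.mp hp
        exact ⟨y₂, h2, fun hc =>
          hne ((Prod.ext_iff.mp (Set.mem_singleton_iff.mp hc)).2).symm⟩
      · exact ⟨y, hy, hp⟩
  have hdom : IsDomSet (lexProd G (⊤ : SimpleGraph W)) (D \ {(x, y₁)}) :=
    (dom_iff_aux G _).mpr (hproj ▸ (dom_iff_aux G D).mp hmin.1)
  exact hmin.2 (D \ {(x, y₁)})
    ⟨Set.diff_subset, fun h => ((h h1).2 rfl)⟩ hdom

lemma proj_min_aux (G : SimpleGraph V) [Nonempty W] (D : Set (V × W))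
    (hmin : IsMinDomSet (lexProd G (⊤ : SimpleGraph W)) D) :
    IsMinDomSet G (projG D) := by
  refine ⟨(dom_iff_aux G D).mp hmin.1, ?_⟩
  intro S' hS' hdom
  set D' : Set (V × W) := {p ∈ D | p.1 ∈ S'} with hD'
  have hDsub : D' ⊆ D := fun p hp => hp.1
  have hprojeq : projG D' = S' := by
    ext x
    constructor
    · rintro ⟨y, hy, hx⟩; exact hx
    · intro hx
      obtain ⟨y, hy⟩ := hS'.1 hx
      exact ⟨y, hy, hx⟩
  have hdom' : IsDomSet (lexProd G (⊤ : SimpleGraph W)) D' :=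
    (dom_iff_aux G D').mpr (hprojeq ▸ hdom)
  obtain ⟨x, hxD, hxS⟩ := Set.exists_of_ssubset hS'
  obtain ⟨y, hy⟩ := hxD
  exact hmin.2 D' ⟨hDsub, fun hc => hxS ((hc hy).2)⟩ hdom'

end Aux

theorem stmt15 {V W : Type*} [Fintype V] [Fintype W]
    (G : SimpleGraph V) (H : SimpleGraph W)
    (hGconn : G.Connected) (hGwd : WellDominated V G)
    (hWcard : 2 ≤ Fintype.card W) (hHcomplete : H = ⊤) :
    WellDominated (V × W) (lexProd G H) := by
  classical
  subst hHcomplete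
  have : Nonempty W := Fintype.card_pos_iff.mp (by omega)
  intro D₁ D₂ h₁ h₂
  have key : ∀ D : Finset (V × W), IsMinDomSet (lexProd G (⊤ : SimpleGraph W)) ↑D →
      ∃ S : Finset V, (↑S : Set V) = projG (↑D : Set (V × W)) ∧ S.card = D.card := by
    intro D hD
    refine ⟨D.image Prod.fst, ?_, ?_⟩
    · ext x
      simp only [Finset.coe_image, Set.mem_image, Finset.mem_coe, projG, Set.mem_setOf_eq]
      constructor
      · rintro ⟨⟨a, b⟩, hab, rfl⟩; exact ⟨b, hab⟩
      · rintro ⟨y, hy⟩; exact ⟨(x, y), hy, rfl⟩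
    · apply Finset.card_image_of_injOn
      intro p hp q hq hpq
      have h1 : (p.1, p.2) ∈ (↑D : Set (V × W)) := hp
      have h2 : (p.1, q.2) ∈ (↑D : Set (V × W)) := by
        rw [hpq]; exact hq
      have := fiber_subsingleton_aux G (↑D : Set (V × W)) hD h1 h2
      exact Prod.ext hpq this
  obtain ⟨S₁, hS₁, hc₁⟩ := key D₁ h₁
  obtain ⟨S₂, hS₂, hc₂⟩ := key D₂ h₂
  have m₁ : IsMinDomSet G ↑S₁ := by rw [hS₁]; exact proj_min_aux G _ h₁
  have m₂ : IsMinDomSet G ↑S₂ := by rw [hS₂]; exact proj_min_aux G _ h₂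
  rw [← hc₁, ← hc₂]
  exact hGwd S₁ S₂ m₁ m₂
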